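/- For every x ∈ ℝ^d and every u ∈ ℕ, u·Φ(x) ⊆ Φ(x); that is, if y ∈ Φ(x) then uy ∈ Φ(x). -/
import Mathlib


open scoped ENNReal
open Filter

/-- Sup-norm distance from `x ∈ ℝ^d` to the nearest point of `ℤ^d`. -/
noncomputable def nrm {d : ℕ} (x : Fin d → ℝ) : ℝ :=
  ⨆ i, |x i - round (x i)|

/-- The class `𝒟` of non-increasing `ψ : ℕ → ℝ≥0` with `Σ ψ(n)^d = ∞`. -/
def calD (d : ℕ) : Set (ℕ → ℝ) :=
  {ψ | (∀ n, 0 ≤ ψ n) ∧ Antitone ψ ∧ ¬ Summable (fun n => ψ n ^ d)}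

/-- The inhomogeneously `ψ`-approximable pairs. -/
def W {d : ℕ} (ψ : ℕ → ℝ) : Set ((Fin d → ℝ) × (Fin d → ℝ)) :=
  {p | ∃ᶠ n : ℕ in atTop, nrm (fun i => (n : ℝ) * p.1 i + p.2 i) < ψ n}

/-- `Π = ⋂_{ψ ∈ 𝒟} W(ψ)`. -/
def PiSet (d : ℕ) : Set ((Fin d → ℝ) × (Fin d → ℝ)) := ⋂ ψ ∈ calD d, W ψ

/-- The vertical fiber `Φ(x)`. -/
def Phi {d : ℕ} (x : Fin d → ℝ) : Set (Fin d → ℝ) := {y | (x, y) ∈ PiSet d}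

lemma nrm_bddAbove {d : ℕ} (z : Fin d → ℝ) :
    BddAbove (Set.range fun i => |z i - round (z i)|) := by
  refine ⟨1/2, ?_⟩
  rintro r ⟨j, rfl⟩
  exact abs_sub_round (z j)

lemma nrm_nonneg {d : ℕ} (z : Fin d → ℝ) : 0 ≤ nrm z :=
  Real.iSup_nonneg (fun i => abs_nonneg _)

lemma nrm_le {d : ℕ} (z : Fin d → ℝ) (i : Fin d) : |z i - round (z i)| ≤ nrm z :=
  le_ciSup (nrm_bddAbove z) i

lemma nrm_nat_mul_le {d : ℕ} (u : ℕ) (z : Fin d → ℝ) :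
    nrm (fun i => (u : ℝ) * z i) ≤ u * nrm z := by
  apply Real.iSup_le _ (mul_nonneg (Nat.cast_nonneg u) (nrm_nonneg z))
  intro i
  calc |(u : ℝ) * z i - round ((u : ℝ) * z i)|
      ≤ |(u : ℝ) * z i - ((u : ℤ) * round (z i) : ℤ)| := round_le _ _
    _ = |(u : ℝ) * (z i - round (z i))| := by push_cast; ring_nf
    _ = (u : ℝ) * |z i - round (z i)| := by
        rw [abs_mul, abs_of_nonneg (Nat.cast_nonneg (α := ℝ) u)]
    _ ≤ u * nrm z := mul_le_mul_of_nonneg_left (nrm_le z i) (Nat.cast_nonneg u)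

lemma summable_of_summable_mul {u : ℕ} (hu : 0 < u) {g : ℕ → ℝ}
    (hg0 : ∀ n, 0 ≤ g n) (hg : Antitone g) (h : Summable (fun n => g (u * n))) :
    Summable g := by
  apply summable_of_sum_range_le (c := u * ∑' n, g (u * n)) hg0
  intro N
  calc ∑ n ∈ Finset.range N, g n
      ≤ ∑ n ∈ Finset.range (u * N), g n := by
        apply Finset.sum_le_sum_of_subset_of_nonneg
        · exact Finset.range_subset_range.2 (Nat.le_mul_of_pos_left N hu)
        · intro n _ _; exact hg0 n
    _ ≤ u * ∑ m ∈ Finset.range N, g (u * m) := by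
        induction N with
        | zero => simp
        | succ N ih =>
          rw [Nat.mul_succ, Finset.sum_range_succ, mul_add,
            ← Finset.sum_range_add_sum_Ico _ (Nat.le_add_right (u*N) u)]
          refine add_le_add ih ?_
          calc ∑ n ∈ Finset.Ico (u*N) (u*N+u), g n
              ≤ ∑ _n ∈ Finset.Ico (u*N) (u*N+u), g (u*N) := by
                apply Finset.sum_le_sum
                intro n hn
                exact hg (Finset.mem_Ico.1 hn).1
            _ = u * g (u * N) := by
                rw [Finset.sum_const, Nat.card_Ico]
                simp [nsmul_eq_mul]
    _ ≤ u * ∑' n, g (u * n) := by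
        apply mul_le_mul_of_nonneg_left _ (Nat.cast_nonneg u)
        exact Summable.sum_le_tsum _ (fun n _ => hg0 _) h

theorem stmt8 {d : ℕ} (x : Fin d → ℝ) (u : ℕ) (hu : 0 < u) (y : Fin d → ℝ)
    (hy : y ∈ Phi x) : (fun i => (u : ℝ) * y i) ∈ Phi x := by
  have hu' : (0 : ℝ) < u := Nat.cast_pos.2 hu
  simp only [Phi, PiSet, Set.mem_setOf_eq, Set.mem_iInter] at hy ⊢
  intro ψ hψ
  obtain ⟨hψ0, hψa, hψs⟩ := hψ
  set ψ' : ℕ → ℝ := fun n => ψ (u * n) / u with hψ'def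
  have hψ' : ψ' ∈ calD d := by
    refine ⟨fun n => div_nonneg (hψ0 _) hu'.le, ?_, ?_⟩
    · intro a b hab
      have : ψ (u * b) ≤ ψ (u * a) := hψa (Nat.mul_le_mul_left u hab)
      exact div_le_div_of_nonneg_right this hu'.le |>.trans le_rfl
    · intro hsum
      apply hψs
      have h1 : Summable (fun n => ψ (u * n) ^ d) := by
        have := hsum.mul_right ((u : ℝ) ^ d)
        refine this.congr (fun n => ?_)
        simp only [hψ'def, div_pow]
        field_simp
      exact summable_of_summable_mul hu (fun n => pow_nonneg (hψ0 n) d)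
        (fun a b hab => pow_le_pow_left₀ (hψ0 b) (hψa hab) d) h1
  have hfreq := hy ψ' hψ'
  have key : ∀ n : ℕ, nrm (fun i => (n : ℝ) * x i + y i) < ψ' n →
      nrm (fun i => ((u * n : ℕ) : ℝ) * x i + (u : ℝ) * y i) < ψ (u * n) := by
    intro n hn
    have heq : (fun i => ((u * n : ℕ) : ℝ) * x i + (u : ℝ) * y i)
        = (fun i => (u : ℝ) * ((n : ℝ) * x i + y i)) := by
      funext i; push_cast; ring
    rw [heq]
    calc nrm (fun i => (u : ℝ) * ((n : ℝ) * x i + y i))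
        ≤ u * nrm (fun i => (n : ℝ) * x i + y i) := nrm_nat_mul_le u _
      _ < u * ψ' n := by exact (mul_lt_mul_iff_right₀ hu').2 hn
      _ = ψ (u * n) := by
          simp only [hψ'def]
          field_simp
  have h2 : ∃ᶠ n in atTop,
      nrm (fun i => ((u * n : ℕ) : ℝ) * x i + (u : ℝ) * y i) < ψ (u * n) :=
    hfreq.mono key
  have hmap : ∃ᶠ m : ℕ in Filter.map (fun n => u * n) atTop,
      nrm (fun i => (m : ℝ) * x i + (u : ℝ) * y i) < ψ m := by
    rw [Filter.frequently_map]
    exact h2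
  have htend : Tendsto (fun n => u * n) atTop atTop :=
    tendsto_atTop_mono (fun n => Nat.le_mul_of_pos_left n hu) tendsto_id
  exact hmap.filter_mono htend
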